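/- arXiv:2404.00746 — 3 statements merged into one kernel-verified Lean document; each statement's English description precedes it below -/
import Mathlib

section
/- Let S be an uncertain sequence all of whose existential probabilities lie in the interval [0,1], and let α and α' be patterns such that α is a sublist (subsequence) of α'. Then maxPr_S(α') ≤ maxPr_S(α). That is, the maximum occurrence probability maxPr_S is anti-monotone with respect to the subsequence relation on patterns. -/
variable {I : Type*}

/-- An uncertain sequence: a finite list of (item, existential probability) pairs. -/
abbrev USeq (I : Type*) := List (I × ℝ)

/-- An uncertain database: a finite list of uncertain sequences. -/
abbrev UDB (I : Type*) := List (USeq I)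

/-- `α` occurs in `S`: some sublist of `S` has item list `α`. -/
def Occurs (α : List I) (S : USeq I) : Prop :=
  ∃ o : USeq I, o.Sublist S ∧ o.map Prod.fst = α

/-- Maximum occurrence probability of pattern `α` in `S`
(`0` if `α` has no occurrence in `S`; `1` for the empty pattern). -/
noncomputable def maxPrS [DecidableEq I] (α : List I) (S : USeq I) : ℝ :=
  (((S.sublists.filter fun o => decide (o.map Prod.fst = α)).map
      fun o => (o.map Prod.snd).prod).maximum).unbotD 0

/-- Greedy projection: `projSeq α S = some S'` iff `α` occurs in `S`, in which case `S'`
is the suffix of `S` strictly after the last matched position of the greedy (leftmost)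
occurrence of `α` in `S`.  For the empty pattern it is `S` itself. -/
def projSeq [DecidableEq I] : List I → USeq I → Option (USeq I)
  | [], S => some S
  | _ :: _, [] => none
  | i :: α, (x, _) :: rest =>
      if x = i then projSeq α rest else projSeq (i :: α) rest

/-- The projected database `DB|α`. -/
def projDB [DecidableEq I] (α : List I) (DB : UDB I) : UDB I :=
  DB.filterMap (projSeq α)

/-- `P̂_D(i)`: maximum probability of an entry with item `i` over all sequences of `D`
(`0` if `i` occurs in no sequence of `D`). -/
noncomputable def Phat [DecidableEq I] (D : UDB I) (i : I) : ℝ :=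
  (((D.flatten.filter fun e => decide (e.1 = i)).map Prod.snd).maximum).unbotD 0

/-- `maxPr(α)` relative to `DB`: the product of per-step maximum probabilities over the
successively projected databases. -/
noncomputable def maxPrDB [DecidableEq I] (DB : UDB I) (α : List I) : ℝ :=
  ∏ k : Fin α.length, Phat (projDB (α.take k.val) DB) (α.get k)

/-- Expected support of `α` in `DB`. -/
noncomputable def expSup [DecidableEq I] (DB : UDB I) (α : List I) : ℝ :=
  (DB.map fun S => maxPrS α S).sum

/-- `expSup^cap` of a nonempty pattern (junk value `0` on the empty pattern). -/
noncomputable def expSupCap [DecidableEq I] (DB : UDB I) (α : List I) : ℝ :=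
  match α.getLast? with
  | none => 0
  | some i =>
      maxPrDB DB α.dropLast *
        ((projDB α.dropLast DB).map fun S' => maxPrS [i] S').sum

/-- Number of sequences of `D` in which item `i` occurs. -/
def supCount [DecidableEq I] (D : UDB I) (i : I) : ℕ :=
  (D.filter fun S => decide (i ∈ S.map Prod.fst)).length

/-- `expSupport^top` of a nonempty pattern (junk value `0` on the empty pattern). -/
noncomputable def expSupTop [DecidableEq I] (DB : UDB I) (α : List I) : ℝ :=
  match α.getLast? with
  | none => 0
  | some i =>
      maxPrDB DB α.dropLast * Phat (projDB α.dropLast DB) i *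
        (supCount (projDB α.dropLast DB) i : ℝ)

/-- Item `i` occurs in some sequence of `D`. -/
def ItemOccursIn (D : UDB I) (i : I) : Prop :=
  ∃ S ∈ D, i ∈ S.map Prod.fst

/-- `sWeight`: average weight of the items of a pattern. -/
noncomputable def sWeight (w : I → ℝ) (α : List I) : ℝ :=
  (α.map w).sum / (α.length : ℝ)

/-- Maximum weight among the items of a pattern (`0` for the empty pattern). -/
noncomputable def mxWs (w : I → ℝ) (α : List I) : ℝ :=
  ((α.map w).maximum).unbotD 0

/-- Maximum weight among items occurring in some sequence of `D` (`0` if none). -/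
noncomputable def mxWDB (w : I → ℝ) (D : UDB I) : ℝ :=
  ((D.flatten.map fun e => w e.1).maximum).unbotD 0

/-- `wgt^cap`. -/
noncomputable def wgtCap [DecidableEq I] (DB : UDB I) (w : I → ℝ) (α : List I) : ℝ :=
  max (mxWDB w (projDB α.dropLast DB)) (mxWs w α)

/-- Weighted expected support. -/
noncomputable def WES [DecidableEq I] (DB : UDB I) (w : I → ℝ) (α : List I) : ℝ :=
  expSup DB α * sWeight w α

/-- `wExpSup^cap`. -/
noncomputable def wExpSupCap [DecidableEq I] (DB : UDB I) (w : I → ℝ) (α : List I) : ℝ :=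
  expSupCap DB α * wgtCap DB w α

private lemma prod_snd_nonneg (l : List (I × ℝ)) (hl : ∀ e ∈ l, (0:ℝ) ≤ e.2) :
    (0:ℝ) ≤ (l.map Prod.snd).prod := by
  apply List.prod_nonneg
  intro x hx
  obtain ⟨e, he, rfl⟩ := List.mem_map.mp hx
  exact hl e he

private lemma prod_snd_anti {l l' : List (I × ℝ)} (hsub : l.Sublist l')
    (hl' : ∀ e ∈ l', e.2 ∈ Set.Icc (0:ℝ) 1) :
    (l'.map Prod.snd).prod ≤ (l.map Prod.snd).prod := by
  induction hsub with
  | slnil => simp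
  | cons a hs ih =>
    rename_i u v
    simp only [List.map_cons, List.prod_cons]
    have h0 : (0:ℝ) ≤ (v.map Prod.snd).prod :=
      prod_snd_nonneg v (fun e he => (hl' e (List.mem_cons_of_mem _ he)).1)
    have ha := hl' a (List.mem_cons_self)
    calc a.2 * (v.map Prod.snd).prod ≤ 1 * (v.map Prod.snd).prod := by
          exact mul_le_mul_of_nonneg_right ha.2 h0
      _ = (v.map Prod.snd).prod := one_mul _
      _ ≤ (u.map Prod.snd).prod := ih (fun e he => hl' e (List.mem_cons_of_mem _ he))
  | cons_cons a hs ih =>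
    rename_i u v
    simp only [List.map_cons, List.prod_cons]
    have ha := hl' a (List.mem_cons_self)
    exact mul_le_mul_of_nonneg_left (ih (fun e he => hl' e (List.mem_cons_of_mem _ he))) ha.1

private lemma le_maxPrS [DecidableEq I] {α : List I} {S o : USeq I}
    (ho : o.Sublist S) (hmap : o.map Prod.fst = α) :
    (o.map Prod.snd).prod ≤ maxPrS α S := by
  have hmem : o ∈ S.sublists.filter fun o => decide (o.map Prod.fst = α) := by
    rw [List.mem_filter]
    exact ⟨List.mem_sublists.mpr ho, by simp [hmap]⟩
  have hmem2 : (o.map Prod.snd).prod ∈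
      (S.sublists.filter fun o => decide (o.map Prod.fst = α)).map
        fun o => (o.map Prod.snd).prod := List.mem_map_of_mem hmem
  have := List.le_maximum_of_mem' hmem2
  unfold maxPrS
  cases hmax : List.maximum ((S.sublists.filter fun o => decide (o.map Prod.fst = α)).map
      fun o => (o.map Prod.snd).prod) with
  | bot => rw [hmax] at this; exact absurd this (by simp)
  | coe m =>
    rw [hmax] at this
    simpa using this

/-- If all probabilities of `S` lie in `[0,1]` and `α` is a sublist (subsequence) of `α'`,
then `maxPr_S(α') ≤ maxPr_S(α)`: `maxPr_S` is anti-monotone w.r.t. the subsequence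
relation on patterns. -/
theorem maxPrS_anti_of_sublist [DecidableEq I]
    (S : USeq I) (hp : ∀ e ∈ S, e.2 ∈ Set.Icc (0 : ℝ) 1)
    (α α' : List I) (h : α.Sublist α') :
    maxPrS α' S ≤ maxPrS α S := by
  set L := (S.sublists.filter fun o => decide (o.map Prod.fst = α')).map
      fun o => (o.map Prod.snd).prod with hL
  have h0 : (0:ℝ) ≤ maxPrS α S := by
    unfold maxPrS
    cases hmax : List.maximum ((S.sublists.filter fun o => decide (o.map Prod.fst = α)).map
        fun o => (o.map Prod.snd).prod) with
    | bot => simp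
    | coe m =>
      have hm := List.maximum_mem hmax
      obtain ⟨o, ho, rfl⟩ := List.mem_map.mp hm
      have hsub : o.Sublist S := List.mem_sublists.mp (List.mem_filter.mp ho).1
      simpa using prod_snd_nonneg o (fun e he => (hp e (hsub.subset he)).1)
  show (L.maximum).unbotD 0 ≤ maxPrS α S
  cases hmax : L.maximum with
  | bot => simpa using h0
  | coe m =>
    have hm := List.maximum_mem hmax
    rw [hL] at hm
    obtain ⟨o', ho', rfl⟩ := List.mem_map.mp hm
    have hfil := List.mem_filter.mp ho'
    have hsub : o'.Sublist S := List.mem_sublists.mp hfil.1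
    have hmap' : o'.map Prod.fst = α' := by simpa using hfil.2
    have hαo' : α.Sublist (o'.map Prod.fst) := hmap' ▸ h
    obtain ⟨o, hoo', homap⟩ := List.sublist_map_iff.mp hαo'
    have h1 : (o'.map Prod.snd).prod ≤ (o.map Prod.snd).prod :=
      prod_snd_anti hoo' (fun e he => hp e (hsub.subset he))
    have h2 : (o.map Prod.snd).prod ≤ maxPrS α S :=
      le_maxPrS (hoo'.trans hsub) homap.symm
    simpa using h1.trans h2
end

section
/- Let DB be an uncertain database and let α, β be patterns. Then every item that occurs in some sequence of the projected database DB|(α ++ β) also occurs in some sequence of DB|α; consequently P̂_{DB|(α ++ β)}(i) ≤ P̂_{DB|α}(i) for every item i (when all probabilities are nonnegative), and mxW_DB(DB|(α ++ β)) ≤ mxW_DB(DB|α) (when all item weights lie in [0,1]). -/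
variable {I : Type*}

lemma projSeq_nil_eq [DecidableEq I] (S : USeq I) : projSeq ([] : List I) S = some S := by
  unfold projSeq; rfl

lemma projSeq_cons_nil_eq [DecidableEq I] (i : I) (α : List I) :
    projSeq (i :: α) ([] : USeq I) = none := by rw [projSeq]

lemma projSeq_cons_cons_eq [DecidableEq I] (i : I) (α : List I) (x : I) (p : ℝ)
    (rest : USeq I) :
    projSeq (i :: α) ((x, p) :: rest) =
      if x = i then projSeq α rest else projSeq (i :: α) rest := by rw [projSeq]

lemma projSeq_append_aux [DecidableEq I] :
    ∀ (α β : List I) (S T : USeq I), projSeq (α ++ β) S = some T →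
      ∃ T', projSeq α S = some T' ∧ projSeq β T' = some T
  | [], β, S, T, h => ⟨S, projSeq_nil_eq S, h⟩
  | i :: α, β, [], T, h => by rw [List.cons_append, projSeq_cons_nil_eq] at h; exact absurd h (by simp)
  | i :: α, β, (x, p) :: rest, T, h => by
      rw [List.cons_append, projSeq_cons_cons_eq] at h
      rw [projSeq_cons_cons_eq]
      by_cases hx : x = i
      · rw [if_pos hx] at h ⊢
        exact projSeq_append_aux α β rest T h
      · rw [if_neg hx] at h ⊢
        exact projSeq_append_aux (i :: α) β rest T h
  termination_by α _ S => α.length + S.length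

lemma projSeq_sublist_aux [DecidableEq I] :
    ∀ (β : List I) (S T : USeq I), projSeq β S = some T → T.Sublist S
  | [], S, T, h => by
      rw [projSeq_nil_eq] at h
      cases h
      exact List.Sublist.refl S
  | i :: β, [], T, h => by rw [projSeq_cons_nil_eq] at h; exact absurd h (by simp)
  | i :: β, (x, p) :: rest, T, h => by
      rw [projSeq_cons_cons_eq] at h
      by_cases hx : x = i
      · rw [if_pos hx] at h
        exact (projSeq_sublist_aux β rest T h).cons _
      · rw [if_neg hx] at h
        exact (projSeq_sublist_aux (i :: β) rest T h).cons _

lemma maximum_unbot_le_aux (L M : List ℝ) (hM : ∀ x ∈ M, 0 ≤ x)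
    (hLM : ∀ x ∈ L, x ∈ M) : L.maximum.unbotD 0 ≤ M.maximum.unbotD 0 := by
  rcases hL : L.maximum with _ | m
  · rcases hMm : M.maximum with _ | m
    · exact le_refl _
    · exact hM m (List.maximum_mem hMm)
  · have hmM : m ∈ M := hLM m (List.maximum_mem hL)
    have h := List.le_maximum_of_mem' hmM
    rcases hMm : M.maximum with _ | m'
    · rw [hMm] at h; exact absurd h (WithBot.not_coe_le_bot m)
    · rw [hMm] at h
      have : (m : WithBot ℝ) ≤ (m' : WithBot ℝ) := h
      exact_mod_cast WithBot.coe_le_coe.mp this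

lemma mem_flatten_projDB_aux [DecidableEq I] (DB : UDB I) (α β : List I)
    (e : I × ℝ) (he : e ∈ (projDB (α ++ β) DB).flatten) :
    e ∈ (projDB α DB).flatten := by
  rw [List.mem_flatten] at he ⊢
  obtain ⟨T, hT, heT⟩ := he
  rw [projDB, List.mem_filterMap] at hT
  obtain ⟨S, hS, hproj⟩ := hT
  obtain ⟨T', hT', hβ⟩ := projSeq_append_aux α β S T hproj
  refine ⟨T', ?_, (projSeq_sublist_aux β T' T hβ).mem heT⟩
  rw [projDB, List.mem_filterMap]
  exact ⟨S, hS, hT'⟩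

lemma mem_flatten_DB_aux [DecidableEq I] (DB : UDB I) (α : List I)
    (e : I × ℝ) (he : e ∈ (projDB α DB).flatten) : e ∈ DB.flatten := by
  rw [List.mem_flatten] at he ⊢
  obtain ⟨T, hT, heT⟩ := he
  rw [projDB, List.mem_filterMap] at hT
  obtain ⟨S, hS, hproj⟩ := hT
  exact ⟨S, hS, (projSeq_sublist_aux α S T hproj).mem heT⟩

/-- Every item occurring in some sequence of `DB|(α ++ β)` also occurs in some sequence
of `DB|α`; consequently `P̂` (for nonnegative probabilities) and `mxW_DB` (for weights in
`[0,1]`) do not increase when the projecting pattern is extended. -/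
theorem projDB_append_items_and_bounds [DecidableEq I]
    (DB : UDB I) (α β : List I) :
    (∀ i : I, ItemOccursIn (projDB (α ++ β) DB) i → ItemOccursIn (projDB α DB) i) ∧
    ((∀ S ∈ DB, ∀ e ∈ S, 0 ≤ e.2) →
      ∀ i : I, Phat (projDB (α ++ β) DB) i ≤ Phat (projDB α DB) i) ∧
    (∀ w : I → ℝ, (∀ x : I, w x ∈ Set.Icc (0 : ℝ) 1) →
      mxWDB w (projDB (α ++ β) DB) ≤ mxWDB w (projDB α DB)) := by
  refine ⟨?_, ?_, ?_⟩
  · rintro i ⟨T, hT, hi⟩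
    rw [List.mem_map] at hi
    obtain ⟨e, heT, hei⟩ := hi
    rw [projDB, List.mem_filterMap] at hT
    obtain ⟨S, hS, hproj⟩ := hT
    obtain ⟨T', hT', hβ⟩ := projSeq_append_aux α β S T hproj
    refine ⟨T', ?_, ?_⟩
    · rw [projDB, List.mem_filterMap]; exact ⟨S, hS, hT'⟩
    · rw [List.mem_map]
      exact ⟨e, (projSeq_sublist_aux β T' T hβ).mem heT, hei⟩
  · intro hpos i
    unfold Phat
    apply maximum_unbot_le_aux
    · intro x hx
      rw [List.mem_map] at hx
      obtain ⟨e, he, rfl⟩ := hx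
      rw [List.mem_filter] at he
      have := mem_flatten_DB_aux DB α e he.1
      rw [List.mem_flatten] at this
      obtain ⟨S, hS, heS⟩ := this
      exact hpos S hS e heS
    · intro x hx
      rw [List.mem_map] at hx ⊢
      obtain ⟨e, he, rfl⟩ := hx
      rw [List.mem_filter] at he
      exact ⟨e, List.mem_filter.mpr ⟨mem_flatten_projDB_aux DB α β e he.1, he.2⟩, rfl⟩
  · intro w hw
    unfold mxWDB
    apply maximum_unbot_le_aux
    · intro x hx
      rw [List.mem_map] at hx
      obtain ⟨e, _, rfl⟩ := hx
      exact (hw e.1).1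
    · intro x hx
      rw [List.mem_map] at hx ⊢
      obtain ⟨e, he, rfl⟩ := hx
      exact ⟨e, mem_flatten_projDB_aux DB α β e he, rfl⟩
end

section
/- (Lemma 3 of the paper.) Let DB be an uncertain database, with each item x carrying a weight w(x) ∈ [0,1]. Let α be a nonempty pattern and α' = α ++ β, where β is a (possibly empty) pattern each of whose items occurs in some sequence of the projected database DB|α. Then sWeight(α') ≤ wgt^cap(α); that is, the value wgt^cap(α) is greater than or equal to the sWeight value of α and of all such super patterns of α. -/
variable {I : Type*}

lemma projSeq_sublist [DecidableEq I] : ∀ (γ : List I) (S S' : USeq I),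
    projSeq γ S = some S' → S'.Sublist S := by
  intro γ S
  induction S generalizing γ with
  | nil =>
    cases γ with
    | nil => intro S' h; simp [projSeq] at h; simp [← h]
    | cons i γ => intro S' h; simp [projSeq] at h
  | cons a rest ih =>
    cases γ with
    | nil =>
      intro S' h
      simp only [projSeq, Option.some.injEq] at h
      simp [← h]
    | cons i γ =>
      intro S' h
      obtain ⟨x, p⟩ := a
      by_cases hx : x = i
      · simp only [projSeq, if_pos hx] at h
        exact (ih γ S' h).cons _
      · simp only [projSeq, if_neg hx] at h
        exact (ih (i :: γ) S' h).cons _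

lemma projSeq_append [DecidableEq I] : ∀ (γ δ : List I) (S S' : USeq I),
    projSeq (γ ++ δ) S = some S' →
      ∃ T, projSeq γ S = some T ∧ projSeq δ T = some S' := by
  intro γ δ S
  induction S generalizing γ with
  | nil =>
    cases γ with
    | nil => intro S' h; exact ⟨[], rfl, h⟩
    | cons i γ => intro S' h; simp [projSeq] at h
  | cons a rest ih =>
    cases γ with
    | nil => intro S' h; exact ⟨a :: rest, rfl, h⟩
    | cons i γ =>
      intro S' h
      obtain ⟨x, p⟩ := a
      by_cases hx : x = i
      · simp only [List.cons_append, projSeq, if_pos hx] at h ⊢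
        exact ih γ S' h
      · simp only [List.cons_append, projSeq, if_neg hx] at h ⊢
        exact ih (i :: γ) S' h

lemma le_mxWs (w : I → ℝ) {α : List I} {i : I} (h : i ∈ α) : w i ≤ mxWs w α := by
  have h1 : (w i : WithBot ℝ) ≤ (α.map w).maximum :=
    List.le_maximum_of_mem' (List.mem_map_of_mem h)
  unfold mxWs
  cases hm : (α.map w).maximum with
  | bot => rw [hm] at h1; simp at h1
  | coe m => rw [hm] at h1; simpa using h1

lemma le_mxWDB (w : I → ℝ) {D : UDB I} {e : I × ℝ} (h : e ∈ D.flatten) :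
    w e.1 ≤ mxWDB w D := by
  have h1 : (w e.1 : WithBot ℝ) ≤ (D.flatten.map fun e => w e.1).maximum :=
    List.le_maximum_of_mem' (List.mem_map_of_mem h)
  unfold mxWDB
  cases hm : (D.flatten.map fun e => w e.1).maximum with
  | bot => rw [hm] at h1; simp at h1
  | coe m => rw [hm] at h1; simpa using h1

/-- Lemma 3: if all weights lie in `[0,1]`, `α` is nonempty and every item of the
(possibly empty) pattern `β` occurs in some sequence of `DB|α`, then
`sWeight(α ++ β) ≤ wgt^cap(α)`. -/
theorem sWeight_le_wgtCap [DecidableEq I]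
    (DB : UDB I) (w : I → ℝ) (hw : ∀ x : I, w x ∈ Set.Icc (0 : ℝ) 1)
    (α β : List I) (hα : α ≠ [])
    (hβocc : ∀ i ∈ β, ItemOccursIn (projDB α DB) i) :
    sWeight w (α ++ β) ≤ wgtCap DB w α := by
  set M := wgtCap DB w α with hM
  have hkey : ∀ i ∈ α ++ β, w i ≤ M := by
    intro i hi
    rcases List.mem_append.1 hi with hiα | hiβ
    · exact le_trans (le_mxWs w hiα) (le_max_right _ _)
    · obtain ⟨S', hS', hiS'⟩ := hβocc i hiβ
      obtain ⟨S, _, hproj⟩ := List.mem_filterMap.1 hS'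
      have hαdec : α.dropLast ++ [α.getLast hα] = α := List.dropLast_append_getLast hα
      rw [← hαdec] at hproj
      obtain ⟨T, hT, hTS'⟩ := projSeq_append _ _ _ _ hproj
      have hsub : S'.Sublist T := projSeq_sublist _ _ _ hTS'
      obtain ⟨e, he, hei⟩ := List.mem_map.1 hiS'
      have heT : e ∈ T := hsub.mem he
      have heF : e ∈ (projDB α.dropLast DB).flatten := by
        refine List.mem_flatten.2 ⟨T, ?_, heT⟩
        exact List.mem_filterMap.2 ⟨S, ‹S ∈ DB›, hT⟩
      calc w i = w e.1 := by rw [hei]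
        _ ≤ mxWDB w (projDB α.dropLast DB) := le_mxWDB w heF
        _ ≤ M := le_max_left _ _
  have hlen : (0 : ℝ) < ((α ++ β).length : ℝ) := by
    have : 0 < (α ++ β).length := by
      simp [List.length_append]
      exact Or.inl (List.length_pos_iff.2 hα)
    exact_mod_cast this
  rw [sWeight, div_le_iff₀ hlen]
  have hsum : ((α ++ β).map w).sum ≤ ((α ++ β).map w).length • M := by
    apply List.sum_le_card_nsmul
    intro x hx
    obtain ⟨i, hi, rfl⟩ := List.mem_map.1 hx
    exact hkey i hi
  simpa [nsmul_eq_mul, mul_comm] using hsum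
end
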